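/- For d ≥ 1, let Ψ₀ and Ψ₁ be the super-operators from d×d matrices to (d+1)×(d+1) matrices defined by: Ψ₀[X] has (Tr(X)·I_d + Xᵀ)/(d+1) as its top-left d×d block and zeros elsewhere; Ψ₁[X] has (Tr(X)·I_d − Xᵀ)/(d+1) as its top-left d×d block, 2·Tr(X)/(d+1) in the bottom-right corner entry, and zeros elsewhere. Then for every n ≥ 1 and every bipartite state ρ on ℂ^d ⊗ ℂ^n, ‖((Ψ₀ − Ψ₁) ⊗ id_n)[ρ]‖_tr = (2/(d+1)) · (1 + ‖ρ^{T_A}‖_tr), where ρ^{T_A} denotes the partial transpose of ρ on the first factor. Consequently, ‖((Ψ₀ − Ψ₁) ⊗ id_n)[ρ]‖_tr − 4/(d+1) = (4/(d+1)) · N_T(ρ), where N_T(ρ) = (‖ρ^{T_A}‖_tr − 1)/2 is the negativity of ρ. -/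

import Mathlib

open scoped Kronecker ComplexOrder Matrix

namespace ChannelDiscrimination

/-- The trace norm `Tr √(Aᴴ A)` of a complex square matrix. -/
noncomputable def traceNorm {ι : Type*} [Fintype ι] [DecidableEq ι]
    (A : Matrix ι ι ℂ) : ℝ :=
  (((Matrix.posSemidef_conjTranspose_mul_self A).1.eigenvectorUnitary : Matrix ι ι ℂ) *
      Matrix.diagonal (fun i => ((Real.sqrt
        ((Matrix.posSemidef_conjTranspose_mul_self A).1.eigenvalues i) : ℝ) : ℂ)) *
      (star ((Matrix.posSemidef_conjTranspose_mul_self A).1.eigenvectorUnitary : Matrix ι ι ℂ)) :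
      Matrix ι ι ℂ).trace.re

/-- A state: a positive semidefinite matrix of trace one. -/
def IsState {ι : Type*} [Fintype ι] (ρ : Matrix ι ι ℂ) : Prop :=
  ρ.PosSemidef ∧ ρ.trace = 1

/-- Separability of a bipartite matrix on `ℂ^m ⊗ ℂ^n`. -/
def IsSeparable {m n : ℕ} (σ : Matrix (Fin m × Fin n) (Fin m × Fin n) ℂ) : Prop :=
  ∃ (N : ℕ) (p : Fin N → ℝ) (ρ : Fin N → Matrix (Fin m) (Fin m) ℂ)
    (τ : Fin N → Matrix (Fin n) (Fin n) ℂ),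
    (∀ i, 0 ≤ p i) ∧ (∑ i, p i = 1) ∧ (∀ i, IsState (ρ i)) ∧ (∀ i, IsState (τ i)) ∧
    σ = ∑ i, (p i : ℂ) • (ρ i ⊗ₖ τ i)

/-- `Φ ⊗ id_n` for a super-operator `Φ` from `m×m` to `k×k` matrices. -/
def tensorId {m k : ℕ} (n : ℕ)
    (Φ : Matrix (Fin m) (Fin m) ℂ →ₗ[ℂ] Matrix (Fin k) (Fin k) ℂ) :
    Matrix (Fin m × Fin n) (Fin m × Fin n) ℂ →ₗ[ℂ]
      Matrix (Fin k × Fin n) (Fin k × Fin n) ℂ where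
  toFun M := Matrix.of fun p q => Φ (Matrix.of fun i j => M (i, p.2) (j, q.2)) p.1 q.1
  map_add' M N := by
    ext p q
    show Φ ((Matrix.of fun i j => M (i, p.2) (j, q.2)) +
        (Matrix.of fun i j => N (i, p.2) (j, q.2))) p.1 q.1 = _
    rw [map_add]
    rfl
  map_smul' c M := by
    ext p q
    show Φ (c • (Matrix.of fun i j => M (i, p.2) (j, q.2))) p.1 q.1 = _
    rw [map_smul]
    rfl

/-- A positive super-operator. -/
def IsPositiveMap {m k : ℕ}
    (Φ : Matrix (Fin m) (Fin m) ℂ →ₗ[ℂ] Matrix (Fin k) (Fin k) ℂ) : Prop :=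
  ∀ X : Matrix (Fin m) (Fin m) ℂ, X.PosSemidef → (Φ X).PosSemidef

/-- A trace-preserving super-operator. -/
def IsTracePreserving {m k : ℕ}
    (Φ : Matrix (Fin m) (Fin m) ℂ →ₗ[ℂ] Matrix (Fin k) (Fin k) ℂ) : Prop :=
  ∀ X : Matrix (Fin m) (Fin m) ℂ, (Φ X).trace = X.trace

/-- A completely positive super-operator: `Φ ⊗ id_n` is positive for every `n`. -/
def IsCompletelyPositive {m k : ℕ}
    (Φ : Matrix (Fin m) (Fin m) ℂ →ₗ[ℂ] Matrix (Fin k) (Fin k) ℂ) : Prop :=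
  ∀ (n : ℕ) (M : Matrix (Fin m × Fin n) (Fin m × Fin n) ℂ),
    M.PosSemidef → (tensorId n Φ M).PosSemidef

/-- A (quantum) channel: completely positive and trace-preserving. -/
def IsChannel {m k : ℕ}
    (Φ : Matrix (Fin m) (Fin m) ℂ →ₗ[ℂ] Matrix (Fin k) (Fin k) ℂ) : Prop :=
  IsCompletelyPositive Φ ∧ IsTracePreserving Φ

/-- An entanglement-breaking channel. -/
def IsEntanglementBreaking {m k : ℕ}
    (Φ : Matrix (Fin m) (Fin m) ℂ →ₗ[ℂ] Matrix (Fin k) (Fin k) ℂ) : Prop :=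
  IsChannel Φ ∧ ∀ (n : ℕ) (ρ : Matrix (Fin m × Fin n) (Fin m × Fin n) ℂ),
    IsState ρ → IsSeparable (tensorId n Φ ρ)

/-- `pad1 M c` is the `(k+1)×(k+1)` matrix with `M` as its top-left `k×k` block,
`c` in the bottom-right corner, and zeros elsewhere. -/
def pad1 {k : ℕ} (M : Matrix (Fin k) (Fin k) ℂ) (c : ℂ) :
    Matrix (Fin (k + 1)) (Fin (k + 1)) ℂ :=
  Matrix.of fun a b =>
    Fin.lastCases (Fin.lastCases c (fun _ => 0) b)
      (fun i => Fin.lastCases 0 (fun j => M i j) b) a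

/-- Partial transpose on the first tensor factor. -/
def ptransposeFst {d n : ℕ} (ρ : Matrix (Fin d × Fin n) (Fin d × Fin n) ℂ) :
    Matrix (Fin d × Fin n) (Fin d × Fin n) ℂ :=
  Matrix.of fun p q => ρ (q.1, p.2) (p.1, q.2)


section Aux

noncomputable def _root_.Matrix.PosSemidef.sqrt {ι : Type*} [Fintype ι] [DecidableEq ι]
    {A : Matrix ι ι ℂ} (hA : A.PosSemidef) : Matrix ι ι ℂ :=
  (hA.1.eigenvectorUnitary : Matrix ι ι ℂ) *
      Matrix.diagonal (fun i => ((Real.sqrt (hA.1.eigenvalues i) : ℝ) : ℂ)) *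
      (star (hA.1.eigenvectorUnitary : Matrix ι ι ℂ))

lemma traceNorm_eq {ι : Type*} [Fintype ι] [DecidableEq ι] (A : Matrix ι ι ℂ) :
    traceNorm A = (Matrix.posSemidef_conjTranspose_mul_self A).sqrt.trace.re := rfl

section SqrtAux
open scoped MatrixOrder

lemma _root_.Matrix.PosSemidef.sqrt_eq_cfc {ι : Type*} [Fintype ι] [DecidableEq ι]
    {A : Matrix ι ι ℂ} (hA : A.PosSemidef) : hA.sqrt = CFC.sqrt A := by
  rw [CFC.sqrt_eq_cfc, cfc_nnreal_eq_real _ A, Matrix.IsHermitian.cfc_eq hA.1,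
    Matrix.IsHermitian.cfc, Unitary.conjStarAlgAut_apply]
  simp only [Matrix.PosSemidef.sqrt, Real.coe_sqrt, Real.coe_toNNReal']
  congr 3
  funext i
  simp [max_eq_left (hA.eigenvalues_nonneg i)]

lemma _root_.Matrix.PosSemidef.posSemidef_sqrt {ι : Type*} [Fintype ι] [DecidableEq ι]
    {A : Matrix ι ι ℂ} (hA : A.PosSemidef) : hA.sqrt.PosSemidef := by
  rw [hA.sqrt_eq_cfc]; exact Matrix.nonneg_iff_posSemidef.mp (CFC.sqrt_nonneg A)

lemma _root_.Matrix.PosSemidef.sq_sqrt {ι : Type*} [Fintype ι] [DecidableEq ι]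
    {A : Matrix ι ι ℂ} (hA : A.PosSemidef) : hA.sqrt ^ 2 = A := by
  rw [hA.sqrt_eq_cfc]; exact CFC.sq_sqrt A hA.nonneg

lemma _root_.Matrix.PosSemidef.eq_sqrt_of_sq_eq {ι : Type*} [Fintype ι] [DecidableEq ι]
    {A B : Matrix ι ι ℂ} (hA : A.PosSemidef) (hB : B.PosSemidef) (h : A ^ 2 = B) :
    A = hB.sqrt := by
  rw [hB.sqrt_eq_cfc, ← h, CFC.sqrt_sq A hA.nonneg]

end SqrtAux

lemma sqrt_congr {ι : Type*} [Fintype ι] [DecidableEq ι]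
    {A B : Matrix ι ι ℂ} (h : A = B) (hA : A.PosSemidef) (hB : B.PosSemidef) :
    hA.sqrt = hB.sqrt := by subst h; rfl

lemma traceNorm_congr_sq {ι : Type*} [Fintype ι] [DecidableEq ι]
    {A B : Matrix ι ι ℂ} (h : Aᴴ * A = Bᴴ * B) :
    traceNorm A = traceNorm B := by
  simp only [traceNorm_eq]
  rw [sqrt_congr h]

lemma traceNorm_neg {ι : Type*} [Fintype ι] [DecidableEq ι]
    (A : Matrix ι ι ℂ) : traceNorm (-A) = traceNorm A :=
  traceNorm_congr_sq (by simp)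

lemma posSemidef_real_smul {ι : Type*} [Fintype ι]
    {A : Matrix ι ι ℂ} (hA : A.PosSemidef) {c : ℝ} (hc : 0 ≤ c) :
    ((c : ℂ) • A).PosSemidef := by
  rw [Matrix.posSemidef_iff_dotProduct_mulVec]
  constructor
  · unfold Matrix.IsHermitian
    rw [Matrix.conjTranspose_smul, hA.isHermitian.eq]
    norm_num
  · intro x
    rw [Matrix.smul_mulVec, dotProduct_smul]
    exact mul_nonneg (by exact_mod_cast hc) ((Matrix.posSemidef_iff_dotProduct_mulVec.mp hA).2 x)

lemma traceNorm_posSemidef {ι : Type*} [Fintype ι] [DecidableEq ι]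
    {A : Matrix ι ι ℂ} (hA : A.PosSemidef) : traceNorm A = A.trace.re := by
  simp only [traceNorm_eq]
  have : A = (Matrix.posSemidef_conjTranspose_mul_self A).sqrt :=
    hA.eq_sqrt_of_sq_eq _ (by rw [pow_two, hA.isHermitian.eq])
  rw [← this]

lemma traceNorm_real_smul {ι : Type*} [Fintype ι] [DecidableEq ι]
    (A : Matrix ι ι ℂ) {c : ℝ} (hc : 0 ≤ c) :
    traceNorm ((c : ℂ) • A) = c * traceNorm A := by
  simp only [traceNorm_eq]
  have h1 : ((c : ℂ) • A)ᴴ * ((c : ℂ) • A) = ((c^2 : ℝ) : ℂ) • (Aᴴ * A) := by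
    rw [Matrix.conjTranspose_smul]
    push_cast
    rw [Matrix.smul_mul, Matrix.mul_smul, smul_smul]
    ring_nf
    simp [Complex.conj_ofReal, pow_two]
  have hs : ((c : ℂ) • (Matrix.posSemidef_conjTranspose_mul_self A).sqrt).PosSemidef :=
    posSemidef_real_smul (Matrix.posSemidef_conjTranspose_mul_self A).posSemidef_sqrt hc
  have h2 : (Matrix.posSemidef_conjTranspose_mul_self ((c : ℂ) • A)).sqrt
      = (c : ℂ) • (Matrix.posSemidef_conjTranspose_mul_self A).sqrt := by
    refine (hs.eq_sqrt_of_sq_eq _ ?_).symm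
    rw [smul_pow, (Matrix.posSemidef_conjTranspose_mul_self A).sq_sqrt, h1]
    push_cast
    ring_nf
  rw [h2, Matrix.trace_smul]
  simp

lemma traceNorm_reindex {ι κ : Type*} [Fintype ι] [DecidableEq ι] [Fintype κ] [DecidableEq κ]
    (e : ι ≃ κ) (A : Matrix ι ι ℂ) :
    traceNorm (Matrix.reindex e e A) = traceNorm A := by
  simp only [traceNorm_eq]
  have hP := Matrix.posSemidef_conjTranspose_mul_self A
  have h1 : (Matrix.reindex e e A)ᴴ * (Matrix.reindex e e A)
      = Matrix.reindex e e (Aᴴ * A) := by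
    simp only [Matrix.reindex_apply, Matrix.conjTranspose_submatrix]
    rw [Matrix.submatrix_mul_equiv]
  have hs : (Matrix.reindex e e hP.sqrt).PosSemidef := by
    simpa using hP.posSemidef_sqrt.submatrix e.symm
  have h2 : (Matrix.posSemidef_conjTranspose_mul_self (Matrix.reindex e e A)).sqrt
      = Matrix.reindex e e hP.sqrt := by
    refine (hs.eq_sqrt_of_sq_eq _ ?_).symm
    rw [h1, pow_two]
    simp only [Matrix.reindex_apply]
    rw [Matrix.submatrix_mul_equiv, ← pow_two, hP.sq_sqrt]
  rw [h2]
  congr 1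
  simp only [Matrix.reindex_apply, Matrix.trace, Matrix.diag, Matrix.submatrix_apply]
  exact Equiv.sum_comp e.symm fun i => hP.sqrt i i

lemma posSemidef_fromBlocks_diag {ι κ : Type*} [Fintype ι] [Fintype κ]
    {A : Matrix ι ι ℂ} {B : Matrix κ κ ℂ} (hA : A.PosSemidef) (hB : B.PosSemidef) :
    (Matrix.fromBlocks A 0 0 B).PosSemidef := by
  rw [Matrix.posSemidef_iff_dotProduct_mulVec]
  constructor
  · exact Matrix.IsHermitian.fromBlocks hA.isHermitian (by simp) hB.isHermitian
  · intro x
    have : dotProduct (star x) ((Matrix.fromBlocks A 0 0 B) *ᵥ x)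
        = dotProduct (star (x ∘ Sum.inl)) (A *ᵥ (x ∘ Sum.inl))
          + dotProduct (star (x ∘ Sum.inr)) (B *ᵥ (x ∘ Sum.inr)) := by
      simp only [dotProduct, Fintype.sum_sum_type, Matrix.mulVec,
        Matrix.fromBlocks, Matrix.of_apply, Pi.star_apply, Function.comp]
      congr 1 <;> refine Finset.sum_congr rfl fun i _ => ?_ <;>
        simp [dotProduct, Fintype.sum_sum_type, Sum.elim]
    rw [this]
    exact add_nonneg ((Matrix.posSemidef_iff_dotProduct_mulVec.mp hA).2 _)
      ((Matrix.posSemidef_iff_dotProduct_mulVec.mp hB).2 _)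

lemma traceNorm_fromBlocks_diag {ι κ : Type*} [Fintype ι] [DecidableEq ι] [Fintype κ]
    [DecidableEq κ] (A : Matrix ι ι ℂ) (B : Matrix κ κ ℂ) :
    traceNorm (Matrix.fromBlocks A 0 0 B) = traceNorm A + traceNorm B := by
  simp only [traceNorm_eq]
  have hA := Matrix.posSemidef_conjTranspose_mul_self A
  have hB := Matrix.posSemidef_conjTranspose_mul_self B
  have hs : (Matrix.fromBlocks hA.sqrt 0 0 hB.sqrt).PosSemidef :=
    posSemidef_fromBlocks_diag hA.posSemidef_sqrt hB.posSemidef_sqrt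
  have h2 : (Matrix.posSemidef_conjTranspose_mul_self (Matrix.fromBlocks A 0 0 B)).sqrt
      = Matrix.fromBlocks hA.sqrt 0 0 hB.sqrt := by
    refine (hs.eq_sqrt_of_sq_eq _ ?_).symm
    rw [pow_two, Matrix.fromBlocks_multiply, Matrix.fromBlocks_conjTranspose,
      Matrix.fromBlocks_multiply]
    simp [← pow_two, hA.sq_sqrt, hB.sq_sqrt]
  rw [h2]
  rw [show (Matrix.fromBlocks hA.sqrt 0 0 hB.sqrt).trace = hA.sqrt.trace + hB.sqrt.trace by
    simp [Matrix.trace, Matrix.diag, Fintype.sum_sum_type, Matrix.fromBlocks]]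
  exact Complex.add_re _ _

@[simp] lemma pad1_cc {k : ℕ} (M : Matrix (Fin k) (Fin k) ℂ) (c : ℂ) (i j : Fin k) :
    pad1 M c i.castSucc j.castSucc = M i j := by
  simp [pad1]

@[simp] lemma pad1_ll {k : ℕ} (M : Matrix (Fin k) (Fin k) ℂ) (c : ℂ) :
    pad1 M c (Fin.last k) (Fin.last k) = c := by
  simp [pad1]

@[simp] lemma pad1_cl {k : ℕ} (M : Matrix (Fin k) (Fin k) ℂ) (c : ℂ) (i : Fin k) :
    pad1 M c i.castSucc (Fin.last k) = 0 := by
  simp [pad1]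

@[simp] lemma pad1_lc {k : ℕ} (M : Matrix (Fin k) (Fin k) ℂ) (c : ℂ) (j : Fin k) :
    pad1 M c (Fin.last k) j.castSucc = 0 := by
  simp [pad1]

def blockEquiv (d n : ℕ) : (Fin d × Fin n) ⊕ Fin n ≃ Fin (d + 1) × Fin n where
  toFun := Sum.elim (fun ip => (ip.1.castSucc, ip.2)) (fun p => (Fin.last d, p))
  invFun := fun ap => Fin.lastCases (Sum.inr ap.2) (fun i => Sum.inl (i, ap.2)) ap.1
  left_inv := by rintro (⟨i, p⟩ | p) <;> simp
  right_inv := by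
    rintro ⟨a, p⟩
    induction a using Fin.lastCases <;> simp

@[simp] lemma blockEquiv_symm_c {d n : ℕ} (i : Fin d) (p : Fin n) :
    (blockEquiv d n).symm (i.castSucc, p) = Sum.inl (i, p) := by
  simp [blockEquiv, Equiv.symm]

@[simp] lemma blockEquiv_symm_l {d n : ℕ} (p : Fin n) :
    (blockEquiv d n).symm (Fin.last d, p) = Sum.inr p := by
  simp [blockEquiv, Equiv.symm]

noncomputable def ptrace {d n : ℕ} (ρ : Matrix (Fin d × Fin n) (Fin d × Fin n) ℂ) :
    Matrix (Fin n) (Fin n) ℂ :=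
  Matrix.of fun p q => ∑ i, ρ (i, p) (i, q)

lemma ptrace_posSemidef {d n : ℕ} {ρ : Matrix (Fin d × Fin n) (Fin d × Fin n) ℂ}
    (hρ : ρ.PosSemidef) : (ptrace ρ).PosSemidef := by
  have : ptrace ρ = ∑ i : Fin d, ρ.submatrix (fun p => (i, p)) (fun p => (i, p)) := by
    ext p q
    simp [ptrace, Matrix.sum_apply]
  rw [this]
  refine Finset.sum_induction _ _ (fun A B hA hB => hA.add hB) Matrix.PosSemidef.zero ?_
  exact fun i _ => hρ.submatrix _

lemma ptrace_trace {d n : ℕ} (ρ : Matrix (Fin d × Fin n) (Fin d × Fin n) ℂ) :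
    (ptrace ρ).trace = ρ.trace := by
  simp only [Matrix.trace, Matrix.diag, ptrace, Matrix.of_apply]
  rw [Fintype.sum_prod_type]
  exact Finset.sum_comm

end Aux

/-- For the transposition channels `Ψ₀, Ψ₁`, every bipartite state `ρ` on `ℂ^d ⊗ ℂ^n`
satisfies `‖((Ψ₀ − Ψ₁) ⊗ id_n)[ρ]‖_tr = (2/(d+1))·(1 + ‖ρ^{T_A}‖_tr)`; consequently
`‖((Ψ₀ − Ψ₁) ⊗ id_n)[ρ]‖_tr − 4/(d+1) = (4/(d+1))·N_T(ρ)` where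
`N_T(ρ) = (‖ρ^{T_A}‖_tr − 1)/2` is the negativity. -/

theorem transposition_channels_advantage_eq_negativity
    {d : ℕ} (hd : 1 ≤ d)
    (Ψ₀ Ψ₁ : Matrix (Fin d) (Fin d) ℂ →ₗ[ℂ] Matrix (Fin (d + 1)) (Fin (d + 1)) ℂ)
    (hΨ₀ : ∀ X : Matrix (Fin d) (Fin d) ℂ,
      Ψ₀ X = pad1 (((d : ℂ) + 1)⁻¹ • (X.trace • (1 : Matrix (Fin d) (Fin d) ℂ) + Xᵀ)) 0)
    (hΨ₁ : ∀ X : Matrix (Fin d) (Fin d) ℂ,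
      Ψ₁ X = pad1 (((d : ℂ) + 1)⁻¹ • (X.trace • (1 : Matrix (Fin d) (Fin d) ℂ) - Xᵀ))
        (2 * X.trace / ((d : ℂ) + 1))) :
    ∀ n : ℕ, 1 ≤ n → ∀ ρ : Matrix (Fin d × Fin n) (Fin d × Fin n) ℂ, IsState ρ →
      traceNorm (tensorId n (Ψ₀ - Ψ₁) ρ) =
        (2 / ((d : ℝ) + 1)) * (1 + traceNorm (ptransposeFst ρ)) ∧
      traceNorm (tensorId n (Ψ₀ - Ψ₁) ρ) - 4 / ((d : ℝ) + 1) =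
        (4 / ((d : ℝ) + 1)) * ((traceNorm (ptransposeFst ρ) - 1) / 2) := by
  intro n hn ρ hρ
  set c : ℝ := 2 / ((d : ℝ) + 1) with hc_def
  have hd0 : ((d : ℝ) + 1) ≠ 0 := by positivity
  have hdc0 : ((d : ℂ) + 1) ≠ 0 := by
    exact_mod_cast (show ((d : ℂ) + 1) ≠ 0 by exact_mod_cast hd0)
  have hc : (0 : ℝ) ≤ c := by positivity
  have hcast : ((c : ℝ) : ℂ) = 2 / ((d : ℂ) + 1) := by
    rw [hc_def]; push_cast; ring
  have hM : tensorId n (Ψ₀ - Ψ₁) ρ =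
      Matrix.reindex (blockEquiv d n) (blockEquiv d n)
        (Matrix.fromBlocks ((c : ℂ) • ptransposeFst ρ) 0 0 (-((c : ℂ) • ptrace ρ))) := by
    ext ⟨a, p⟩ ⟨b, q⟩
    show (Ψ₀ - Ψ₁) (Matrix.of fun i j => ρ (i, p) (j, q)) a b = _
    rw [LinearMap.sub_apply, Matrix.sub_apply, hΨ₀, hΨ₁]
    simp only [Matrix.reindex_apply, Matrix.submatrix_apply]
    set X : Matrix (Fin d) (Fin d) ℂ := Matrix.of fun i j => ρ (i, p) (j, q) with hX
    induction a using Fin.lastCases with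
    | last =>
      induction b using Fin.lastCases with
      | last =>
        simp only [pad1_ll, blockEquiv_symm_l, Matrix.fromBlocks_apply₂₂,
          Matrix.neg_apply, Matrix.smul_apply, ptrace, Matrix.of_apply, hcast, smul_eq_mul]
        have : X.trace = ∑ i, ρ (i, p) (i, q) := by
          simp [Matrix.trace, Matrix.diag, hX]
        rw [this]
        field_simp
        ring
      | cast j =>
        simp
    | cast i =>
      induction b using Fin.lastCases with
      | last =>
        simp
      | cast j =>
        simp only [pad1_cc, blockEquiv_symm_c, Matrix.fromBlocks_apply₁₁,
          Matrix.smul_apply, Matrix.add_apply, Matrix.sub_apply,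
          Matrix.transpose_apply, Matrix.one_apply, ptransposeFst, Matrix.of_apply,
          smul_eq_mul, hcast]
        have : X j i = ρ (j, p) (i, q) := by simp [hX]
        rw [← this]
        field_simp
        ring
  have hPT : traceNorm (ptrace ρ) = 1 := by
    rw [traceNorm_posSemidef (ptrace_posSemidef hρ.1), ptrace_trace, hρ.2, Complex.one_re]
  have h1 : traceNorm (tensorId n (Ψ₀ - Ψ₁) ρ)
      = c * (1 + traceNorm (ptransposeFst ρ)) := by
    rw [hM, traceNorm_reindex, traceNorm_fromBlocks_diag, traceNorm_neg,
      traceNorm_real_smul _ hc, traceNorm_real_smul _ hc, hPT]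
    ring
  constructor
  · rw [h1]
  · rw [h1, hc_def]
    field_simp
    ring


end ChannelDiscrimination
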